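/- Let U ⊆ ℂ^n be a d-dimensional subspace, let s = dim(U ∩ V_{n−d}), let u_1,…,u_d be a basis of U, and write u_1 ∧ ⋯ ∧ u_d = Σ_I c_I v_I in the basis {v_I} of Λ^d ℂ^n. Then c_I = 0 for every d-element subset I with deg I < s, and there exists a d-element subset I with deg I = s and c_I ≠ 0. -/

import Mathlib

/-- The `i`-th standard basis vector of `ℂ^n`. -/
noncomputable def ee (n : ℕ) (i : Fin n) : Fin n → ℂ := Pi.single i 1

/-- The degree of a subset `I ⊆ {1,…,n}` (0-indexed: `deg I = #{i ∈ I : i ≥ d}`). -/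
def degS (n d : ℕ) (I : Finset (Fin n)) : ℕ := (I.filter fun i : Fin n => d ≤ i.val).card

/-- The wedge basis vector `v_I = e_{i_1} ∧ ⋯ ∧ e_{i_d}` for `I = {i_1 < ⋯ < i_d}`. -/
noncomputable def vI (n d : ℕ) (I : Finset (Fin n)) (hI : I.card = d) :
    ExteriorAlgebra ℂ (Fin n → ℂ) :=
  ExteriorAlgebra.ιMulti ℂ d fun k => ee n (I.orderIsoOfFin hI k)

/-- `V_{n-d}`: the span of the last `n - d` standard basis vectors. -/
noncomputable def Vhigh (n d : ℕ) : Submodule ℂ (Fin n → ℂ) :=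
  Submodule.span ℂ {v | ∃ i : Fin n, d ≤ i.val ∧ v = ee n i}

/-- membership in Vhigh -/
lemma mem_Vhigh_iff (n d : ℕ) (x : Fin n → ℂ) :
    x ∈ Vhigh n d ↔ ∀ j : Fin n, j.val < d → x j = 0 := by
  constructor
  · intro hx
    have hle : Vhigh n d ≤
        { carrier := {y : Fin n → ℂ | ∀ j : Fin n, j.val < d → y j = 0}
          add_mem' := fun {a b} ha hb j hj => by simp [ha j hj, hb j hj]
          zero_mem' := fun j hj => rfl
          smul_mem' := fun c x hx j hj => by simp [hx j hj] } := by
      rw [Vhigh, Submodule.span_le]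
      rintro v ⟨i, hi, rfl⟩ j hj
      show ee n i j = 0
      exact Pi.single_eq_of_ne (Fin.ne_of_val_ne (by omega)) 1
    exact hle hx
  · intro h
    have hx : x = ∑ j : Fin n, x j • (Pi.single j 1 : Fin n → ℂ) := by
      ext j
      simp [Pi.single_apply]
    rw [hx]
    apply Submodule.sum_mem
    intro j _
    by_cases hj : j.val < d
    · rw [h j hj, zero_smul]; exact Submodule.zero_mem _
    · exact Submodule.smul_mem _ _ (Submodule.subset_span ⟨j, le_of_not_gt hj, rfl⟩)

lemma exists_good_coords {n : ℕ} (S : Submodule ℂ (Fin n → ℂ)) (C : Finset (Fin n))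
    (hsep : ∀ x ∈ S, (∀ i ∈ C, x i = 0) → x = 0) :
    ∃ T ⊆ C, T.card = Module.finrank ℂ S ∧ ∀ x ∈ S, (∀ i ∈ T, x i = 0) → x = 0 := by
  induction C using Finset.strongInductionOn with
  | _ C ih =>
  -- the evaluation functionals
  set φ : C → Module.Dual ℂ S := fun i => (LinearMap.proj (i : Fin n)).comp S.subtype with hφ
  have hr : Module.finrank ℂ S ≤ C.card := by
    have hinj : Function.Injective (LinearMap.pi φ) := by
      rw [← LinearMap.ker_eq_bot, LinearMap.ker_eq_bot']
      intro x hx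
      have : (x : Fin n → ℂ) = 0 := by
        apply hsep x.1 x.2
        intro i hi
        have := congrFun hx ⟨i, hi⟩
        simpa [φ] using this
      exact Subtype.ext this
    have := LinearMap.finrank_le_finrank_of_injective hinj
    simpa [Module.finrank_pi] using this
  rcases eq_or_lt_of_le hr with heq | hlt
  · exact ⟨C, le_refl _, heq.symm, hsep⟩
  · -- the functionals are linearly dependent
    have hnli : ¬ LinearIndependent ℂ φ := by
      intro h
      have := h.fintype_card_le_finrank
      rw [Subspace.dual_finrank_eq, Fintype.card_coe] at this
      omega
    rw [Fintype.not_linearIndependent_iff] at hnli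
    obtain ⟨g, hg, i0, hi0⟩ := hnli
    have hsub : (C.erase i0.1) ⊂ C := Finset.erase_ssubset i0.2
    have hsep' : ∀ x ∈ S, (∀ i ∈ C.erase i0.1, x i = 0) → x = 0 := by
      intro x hx hzero
      apply hsep x hx
      intro i hi
      by_cases hii : i = i0.1
      · subst hii
        have hev := LinearMap.congr_fun hg ⟨x, hx⟩
        simp only [LinearMap.sum_apply, LinearMap.smul_apply, LinearMap.zero_apply, hφ,
          LinearMap.comp_apply, LinearMap.proj_apply, Submodule.coe_subtype,
          smul_eq_mul] at hev
        rw [Finset.sum_eq_single i0] at hev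
        · rcases mul_eq_zero.mp hev with h | h
          · exact absurd h hi0
          · exact h
        · intro b _ hb
          have hb' : (b : Fin n) ∈ C.erase i0.1 := by
            refine Finset.mem_erase.mpr ⟨?_, b.2⟩
            exact fun hc => hb (Subtype.ext hc)
          rw [hzero _ hb', mul_zero]
        · intro h; exact absurd (Finset.mem_univ i0) h
      · exact hzero i (Finset.mem_erase.mpr ⟨hii, hi⟩)
    obtain ⟨T, hT1, hT2, hT3⟩ := ih _ hsub hsep'
    exact ⟨T, hT1.trans (Finset.erase_subset _ _), hT2, hT3⟩

/-- the minor of the coefficient matrix on columns `I` -/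
noncomputable def minorD (n d : ℕ) (u : Fin d → (Fin n → ℂ)) (I : Finset (Fin n))
    (hI : I.card = d) : ℂ :=
  Matrix.det (Matrix.of fun k l : Fin d => u k (I.orderIsoOfFin hI l))

/-- the alternating form extracting the `I`-th coefficient -/
noncomputable def AI (n d : ℕ) (I : Finset (Fin n)) (hI : I.card = d) :
    (Fin n → ℂ) [⋀^Fin d]→ₗ[ℂ] ℂ :=
  (Matrix.detRowAlternating : (Fin d → ℂ) [⋀^Fin d]→ₗ[ℂ] ℂ).compLinearMap
    (LinearMap.funLeft ℂ ℂ (fun l : Fin d => (I.orderIsoOfFin hI l : Fin n)))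

lemma AI_apply (n d : ℕ) (I : Finset (Fin n)) (hI : I.card = d) (v : Fin d → (Fin n → ℂ)) :
    AI n d I hI v = Matrix.det (Matrix.of fun k l : Fin d => v k (I.orderIsoOfFin hI l)) := by
  rfl

lemma AI_vI (n d : ℕ) (I J : Finset (Fin n)) (hI : I.card = d) (hJ : J.card = d) :
    AI n d I hI (fun k => ee n (J.orderIsoOfFin hJ k)) = if J = I then 1 else 0 := by
  rw [AI_apply]
  split_ifs with h
  · subst h
    have : (Matrix.of fun k l : Fin d => ee n (J.orderIsoOfFin hJ k) (J.orderIsoOfFin hI l))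
        = (1 : Matrix (Fin d) (Fin d) ℂ) := by
      ext k l
      rw [Matrix.one_apply]
      have hIJ : (J.orderIsoOfFin hJ) = (J.orderIsoOfFin hI) := by congr
      rw [hIJ]
      unfold ee
      rw [Matrix.of_apply, Pi.single_apply]
      by_cases hkl : k = l
      · subst hkl; simp
      · rw [if_neg hkl, if_neg]
        intro hcon
        apply hkl
        have := Subtype.ext hcon
        exact ((J.orderIsoOfFin hI).injective this).symm
    rw [this, Matrix.det_one]
  · -- some element of J not in I; that row is zero
    have hne : ¬ J ⊆ I := fun hsub => h (Finset.eq_of_subset_of_card_le hsub (by omega))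
    obtain ⟨j0, hj0J, hj0I⟩ := Finset.not_subset.mp hne
    apply Matrix.det_eq_zero_of_row_eq_zero ((J.orderIsoOfFin hJ).symm ⟨j0, hj0J⟩)
    intro l
    show ee n (J.orderIsoOfFin hJ ((J.orderIsoOfFin hJ).symm ⟨j0, hj0J⟩)) _ = 0
    rw [OrderIso.apply_symm_apply]
    unfold ee
    apply Pi.single_eq_of_ne
    intro hcon
    have : ((I.orderIsoOfFin hI l : Fin n)) = j0 := hcon
    exact hj0I (this ▸ (I.orderIsoOfFin hI l).2)

lemma coeff_eq_minor (n d : ℕ) (u : Fin d → (Fin n → ℂ))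
    (c : {I : Finset (Fin n) // I.card = d} → ℂ)
    (hc : ExteriorAlgebra.ιMulti ℂ d u =
      ∑ I : {I : Finset (Fin n) // I.card = d}, c I • vI n d I.1 I.2)
    (I : {I : Finset (Fin n) // I.card = d}) :
    c I = minorD n d u I.1 I.2 := by
  classical
  set F : ∀ i, (Fin n → ℂ) [⋀^Fin i]→ₗ[ℂ] ℂ :=
    Function.update (fun i => (0 : (Fin n → ℂ) [⋀^Fin i]→ₗ[ℂ] ℂ)) d (AI n d I.1 I.2) with hF
  set φ := ExteriorAlgebra.liftAlternating (R := ℂ) F with hφ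
  have h1 : φ (ExteriorAlgebra.ιMulti ℂ d u) = minorD n d u I.1 I.2 := by
    rw [hφ, ExteriorAlgebra.liftAlternating_apply_ιMulti, hF, Function.update_self]
    rfl
  have h2 : ∀ J : {I : Finset (Fin n) // I.card = d},
      φ (vI n d J.1 J.2) = if J = I then 1 else 0 := by
    intro J
    rw [hφ, vI, ExteriorAlgebra.liftAlternating_apply_ιMulti, hF, Function.update_self]
    rw [AI_vI]
    congr 1
    simp [Subtype.ext_iff]
  have := congrArg φ hc
  rw [h1, map_sum] at this
  simp only [map_smul, h2, smul_eq_mul, mul_ite, mul_one, mul_zero] at this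
  rw [Finset.sum_ite_eq' Finset.univ I c] at this
  simp at this
  exact this.symm

/-- If some nonzero element of U vanishes on I, the minor is zero. -/
lemma minor_zero (n d : ℕ) (hd1 : 1 ≤ d)
    (U : Submodule ℂ (Fin n → ℂ)) (hU : Module.finrank ℂ U = d)
    (u : Fin d → (Fin n → ℂ)) (hmem : ∀ k, u k ∈ U) (hli : LinearIndependent ℂ u)
    (I : Finset (Fin n)) (hI : I.card = d)
    (x : Fin n → ℂ) (hxU : x ∈ U) (hx0 : x ≠ 0) (hxI : ∀ i ∈ I, x i = 0) :
    minorD n d u I hI = 0 := by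
  classical
  haveI : Nonempty (Fin d) := ⟨⟨0, hd1⟩⟩
  have hli' : LinearIndependent ℂ (fun k => (⟨u k, hmem k⟩ : U)) :=
    hli.of_comp U.subtype
  set b : Module.Basis (Fin d) ℂ U :=
    basisOfLinearIndependentOfCardEqFinrank hli' (by simp [hU]) with hb
  have hbu : ∀ k, (b k : Fin n → ℂ) = u k := by
    intro k
    rw [hb, coe_basisOfLinearIndependentOfCardEqFinrank]
  set g : Fin d → ℂ := fun k => b.repr ⟨x, hxU⟩ k with hg
  have hxsum : x = ∑ k, g k • u k := by
    have h1 := congrArg (Subtype.val) (b.sum_repr ⟨x, hxU⟩)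
    simp only [Submodule.coe_sum, Submodule.coe_smul, hbu] at h1
    exact h1.symm
  rw [minorD, ← Matrix.exists_vecMul_eq_zero_iff]
  refine ⟨g, ?_, ?_⟩
  · intro hg0
    apply hx0
    rw [hxsum]
    simp [hg0]
  · funext l
    simp only [Matrix.vecMul, dotProduct, Matrix.of_apply, Pi.zero_apply]
    have := hxI (I.orderIsoOfFin hI l : Fin n) (I.orderIsoOfFin hI l).2
    rw [hxsum] at this
    simpa [Finset.sum_apply] using this

/-- If only zero vanishes on I, the minor is nonzero. -/
lemma minor_ne_zero (n d : ℕ)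
    (U : Submodule ℂ (Fin n → ℂ))
    (u : Fin d → (Fin n → ℂ)) (hmem : ∀ k, u k ∈ U) (hli : LinearIndependent ℂ u)
    (I : Finset (Fin n)) (hI : I.card = d)
    (hsep : ∀ x ∈ U, (∀ i ∈ I, x i = 0) → x = 0) :
    minorD n d u I hI ≠ 0 := by
  classical
  intro hdet
  rw [minorD, ← Matrix.exists_vecMul_eq_zero_iff] at hdet
  obtain ⟨g, hg0, hgM⟩ := hdet
  set x : Fin n → ℂ := ∑ k, g k • u k with hx
  have hxU : x ∈ U := Submodule.sum_mem _ fun k _ => Submodule.smul_mem _ _ (hmem k)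
  have hxI : ∀ i ∈ I, x i = 0 := by
    intro i hi
    have hfl := congrFun hgM ((I.orderIsoOfFin hI).symm ⟨i, hi⟩)
    simp only [Matrix.vecMul, dotProduct, Matrix.of_apply, Pi.zero_apply] at hfl
    have : x ((I.orderIsoOfFin hI) ((I.orderIsoOfFin hI).symm ⟨i, hi⟩) : Fin n) = 0 := by
      rw [hx]
      simpa [Finset.sum_apply] using hfl
    rwa [OrderIso.apply_symm_apply] at this
  have := hsep x hxU hxI
  apply hg0
  have hall := Fintype.linearIndependent_iff.mp hli g (by rw [← hx, this])
  funext k; exact hall k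

theorem stmt5 (n d : ℕ) (hd1 : 1 ≤ d) (hdn : d ≤ n - d)
    (U : Submodule ℂ (Fin n → ℂ)) (hU : Module.finrank ℂ U = d)
    (u : Fin d → (Fin n → ℂ)) (hmem : ∀ k, u k ∈ U) (hli : LinearIndependent ℂ u)
    (c : {I : Finset (Fin n) // I.card = d} → ℂ)
    (hc : ExteriorAlgebra.ιMulti ℂ d u =
      ∑ I : {I : Finset (Fin n) // I.card = d}, c I • vI n d I.1 I.2) :
    (∀ I : {I : Finset (Fin n) // I.card = d},
        degS n d I.1 < Module.finrank ℂ ↥(U ⊓ Vhigh n d) → c I = 0) ∧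
    ∃ I : {I : Finset (Fin n) // I.card = d},
        degS n d I.1 = Module.finrank ℂ ↥(U ⊓ Vhigh n d) ∧ c I ≠ 0 := by
  classical
  set s := Module.finrank ℂ ↥(U ⊓ Vhigh n d) with hs
  constructor
  · -- vanishing part
    intro I hlt
    rw [coeff_eq_minor n d u c hc I]
    -- find a nonzero element of U ⊓ Vhigh vanishing on the high part of I
    set Ihi := I.1.filter (fun i : Fin n => d ≤ i.val) with hIhi
    set f : ↥(U ⊓ Vhigh n d) →ₗ[ℂ] (↥Ihi → ℂ) :=
      LinearMap.pi (fun i : ↥Ihi => (LinearMap.proj (i : Fin n)).comp (U ⊓ Vhigh n d).subtype)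
      with hf
    have hker : LinearMap.ker f ≠ ⊥ := by
      intro hk
      have hinj := LinearMap.ker_eq_bot.mp hk
      have := LinearMap.finrank_le_finrank_of_injective hinj
      rw [Module.finrank_pi, Fintype.card_coe] at this
      rw [← hs] at this
      exact absurd hlt (not_lt.mpr this)
    obtain ⟨y, hyker, hy0⟩ := Submodule.exists_mem_ne_zero_of_ne_bot hker
    have hyf : f y = 0 := hyker
    have hyI : ∀ i ∈ I.1, (y : Fin n → ℂ) i = 0 := by
      intro i hi
      by_cases hcase : d ≤ i.val
      · have hiI : i ∈ Ihi := Finset.mem_filter.mpr ⟨hi, hcase⟩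
        have := congrFun hyf ⟨i, hiI⟩
        simpa [hf] using this
      · exact (mem_Vhigh_iff n d y).mp y.2.2 i (not_le.mp hcase)
    exact minor_zero n d hd1 U hU u hmem hli I.1 I.2 y y.2.1
      (fun h => hy0 (Subtype.ext h)) hyI
  · -- existence part
    -- step 1: pick K among the high coordinates
    have hsep1 : ∀ x ∈ U ⊓ Vhigh n d,
        (∀ i ∈ Finset.univ.filter (fun i : Fin n => d ≤ i.val), x i = 0) → x = 0 := by
      intro x hx hzero
      funext j
      by_cases hj : j.val < d
      · exact (mem_Vhigh_iff n d x).mp hx.2 j hj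
      · exact hzero j (Finset.mem_filter.mpr ⟨Finset.mem_univ _, not_lt.mp hj⟩)
    obtain ⟨K, hKsub, hKcard, hKsep⟩ := exists_good_coords (U ⊓ Vhigh n d) _ hsep1
    rw [← hs] at hKcard
    -- the projection killing the high coordinates
    set ρ : (Fin n → ℂ) →ₗ[ℂ] (Fin n → ℂ) :=
      LinearMap.pi (fun j : Fin n =>
        if j.val < d then (LinearMap.proj j : (Fin n → ℂ) →ₗ[ℂ] ℂ) else 0) with hρ
    have hρ_apply : ∀ (x : Fin n → ℂ) (j : Fin n),
        ρ x j = if j.val < d then x j else 0 := by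
      intro x j
      rw [hρ, LinearMap.pi_apply]
      by_cases hj : j.val < d <;> simp [hj]
    have hkerρ : LinearMap.ker ρ = Vhigh n d := by
      ext x
      rw [LinearMap.mem_ker, mem_Vhigh_iff, funext_iff]
      constructor
      · intro h j hj
        have := h j
        rwa [hρ_apply, if_pos hj] at this
      · intro h j
        rw [hρ_apply, Pi.zero_apply]
        by_cases hj : j.val < d
        · rw [if_pos hj]; exact h j hj
        · rw [if_neg hj]
    -- step 2: pick J among the low coordinates for the projected module
    have hsep2 : ∀ y ∈ U.map ρ,
        (∀ i ∈ Finset.univ.filter (fun i : Fin n => i.val < d), y i = 0) → y = 0 := by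
      rintro y ⟨x, hxU, rfl⟩ hzero
      funext j
      by_cases hj : j.val < d
      · exact hzero j (Finset.mem_filter.mpr ⟨Finset.mem_univ _, hj⟩)
      · rw [hρ_apply, if_neg hj, Pi.zero_apply]
    obtain ⟨J, hJsub, hJcard, hJsep⟩ := exists_good_coords (U.map ρ) _ hsep2
    -- compute the rank of the projected module
    have hsd : s ≤ d := by
      rw [hs, ← hU]
      exact Submodule.finrank_mono inf_le_left
    have hrk : Module.finrank ℂ ↥(U.map ρ) = d - s := by
      have h1 := LinearMap.finrank_range_add_finrank_ker (ρ.comp U.subtype)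
      have h2 : LinearMap.range (ρ.comp U.subtype) = U.map ρ := by
        rw [LinearMap.range_comp, Submodule.range_subtype]
      have h3 : LinearMap.ker (ρ.comp U.subtype) = Submodule.comap U.subtype (Vhigh n d) := by
        rw [LinearMap.ker_comp, hkerρ]
      have h4 : Module.finrank ℂ ↥(Submodule.comap U.subtype (Vhigh n d)) = s := by
        rw [hs, ← Submodule.map_comap_subtype, Submodule.finrank_map_subtype_eq]
      rw [h2, h3, h4, hU] at h1
      omega
    rw [hrk] at hJcard
    -- assemble I = J ∪ K
    have hJlow : ∀ i ∈ J, i.val < d := fun i hi =>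
      (Finset.mem_filter.mp (hJsub hi)).2
    have hKhigh : ∀ i ∈ K, d ≤ i.val := fun i hi =>
      (Finset.mem_filter.mp (hKsub hi)).2
    have hdisj : Disjoint J K := by
      rw [Finset.disjoint_left]
      intro i hiJ hiK
      exact absurd (hKhigh i hiK) (not_le.mpr (hJlow i hiJ))
    have hIcard : (J ∪ K).card = d := by
      rw [Finset.card_union_of_disjoint hdisj, hJcard, hKcard]
      omega
    have hIdeg : degS n d (J ∪ K) = s := by
      rw [degS, Finset.filter_union]
      rw [Finset.filter_false_of_mem (fun i hi => not_le.mpr (hJlow i hi)),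
        Finset.filter_true_of_mem hKhigh, Finset.empty_union, hKcard]
    refine ⟨⟨J ∪ K, hIcard⟩, hIdeg, ?_⟩
    rw [coeff_eq_minor n d u c hc]
    apply minor_ne_zero n d U u hmem hli
    intro x hxU hxI
    have hρx : ρ x = 0 := by
      apply hJsep (ρ x) (Submodule.mem_map_of_mem hxU)
      intro i hi
      rw [hρ_apply, if_pos (hJlow i hi)]
      exact hxI i (Finset.mem_union_left _ hi)
    have hxV : x ∈ Vhigh n d := by rw [← hkerρ]; exact hρx
    apply hKsep x (Submodule.mem_inf.mpr ⟨hxU, hxV⟩)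
    intro i hi
    exact hxI i (Finset.mem_union_right _ hi)
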